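/- Let 0 ≤ γ < 1 and 0 ≤ δ < 1, and let F be a family of subsets of [n] with |A| ≤ δn for all A ∈ F. If no set in F is γ-flexible, then ℓ(F) < 1 + (1/(1-γ))·ln(1/(1-δ)). -/

import Mathlib

open Finset

/-- The set of pivots of `A` with respect to the family `F`: elements `i ∈ A` such
that `(A \ {i}) ∪ {j} ∈ F` for some `j ∉ A`. -/
def pivots {n : ℕ} (F : Finset (Finset (Fin n))) (A : Finset (Fin n)) : Finset (Fin n) :=
  A.filter (fun i => ∃ j, j ∉ A ∧ insert j (A.erase i) ∈ F)

/-- `A` is `γ`-flexible with respect to `F` if it has at least `γ|A|` pivots. -/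
def Flexible {n : ℕ} (F : Finset (Finset (Fin n))) (γ : ℝ) (A : Finset (Fin n)) : Prop :=
  γ * A.card ≤ (pivots F A).card

/-- The shadows `A \ {i}` over non-pivots `i` of `A` are "private": counting them over a
level of `F` is at most the number of `(y-1)`-element subsets. -/
lemma lubell_shadow_count {n y : ℕ} (F : Finset (Finset (Fin n))) :
    ∑ A ∈ F.filter (fun A => A.card = y), (A \ pivots F A).card ≤ n.choose (y - 1) := by
  set Fy := F.filter (fun A => A.card = y) with hFy
  have hinj : ∀ A ∈ Fy, ((A \ pivots F A).image (fun i => A.erase i)).card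
      = (A \ pivots F A).card := by
    intro A _
    apply card_image_of_injOn
    intro i hi j hj hij
    have hiA : i ∈ A := (mem_sdiff.mp hi).1
    by_contra hne
    have hij' : A.erase i = A.erase j := hij
    have : i ∈ A.erase j := mem_erase.mpr ⟨hne, hiA⟩
    rw [← hij'] at this
    exact (mem_erase.mp this).1 rfl
  have hdisj : ∀ A ∈ Fy, ∀ B ∈ Fy, A ≠ B →
      Disjoint ((A \ pivots F A).image (fun i => A.erase i))
        ((B \ pivots F B).image (fun i => B.erase i)) := by
    intro A hA B hB hne
    rw [disjoint_left]
    rintro S hSA hSB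
    obtain ⟨i, hi, rfl⟩ := mem_image.mp hSA
    obtain ⟨j, hj, hEB⟩ := mem_image.mp hSB
    have hiA : i ∈ A := (mem_sdiff.mp hi).1
    have hjB : j ∈ B := (mem_sdiff.mp hj).1
    have hBF : B ∈ F := (mem_filter.mp hB).1
    have hBeq : B = insert j (A.erase i) := by
      rw [← hEB, insert_erase hjB]
    by_cases hji : j = i
    · subst hji
      have hBA : B = A := by rw [hBeq, insert_erase hiA]
      exact hne hBA.symm
    · have hjA : j ∉ A := by
        intro hjA
        have : j ∈ A.erase i := mem_erase.mpr ⟨hji, hjA⟩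
        rw [← hEB] at this
        exact (mem_erase.mp this).1 rfl
      have : i ∈ pivots F A := by
        rw [pivots, mem_filter]
        exact ⟨hiA, j, hjA, hBeq ▸ hBF⟩
      exact (mem_sdiff.mp hi).2 this
  calc ∑ A ∈ Fy, (A \ pivots F A).card
      = ∑ A ∈ Fy, ((A \ pivots F A).image (fun i => A.erase i)).card :=
        Eq.symm (Finset.sum_congr rfl hinj)
    _ = (Fy.biUnion (fun A => (A \ pivots F A).image (fun i => A.erase i))).card := by
        rw [Finset.card_biUnion hdisj]
    _ ≤ (Finset.powersetCard (y - 1) (univ : Finset (Fin n))).card := by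
        apply card_le_card
        intro S hS
        rw [mem_biUnion] at hS
        obtain ⟨A, hA, hSA⟩ := hS
        obtain ⟨i, hi, rfl⟩ := mem_image.mp hSA
        rw [mem_powersetCard]
        refine ⟨subset_univ _, ?_⟩
        rw [card_erase_of_mem (mem_sdiff.mp hi).1, (mem_filter.mp hA).2]
    _ = n.choose (y - 1) := by
        rw [card_powersetCard, card_univ, Fintype.card_fin]

/-- The density of a level of a family with no `γ`-flexible set. -/
lemma lubell_level_bound {n : ℕ} (F : Finset (Finset (Fin n))) (γ : ℝ) (hγ1 : γ < 1)
    (hflex : ∀ A ∈ F, ¬ (γ * A.card ≤ ((pivots F A).card : ℝ)))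
    (y : ℕ) (hy1 : 1 ≤ y) (hyn : y ≤ n) :
    ((F.filter (fun A => A.card = y)).card : ℝ) / (n.choose y)
      ≤ 1/((1-γ) * ((n:ℝ) - y + 1)) := by
  set Fy := F.filter (fun A => A.card = y) with hFy
  have H1 : ∀ A ∈ Fy, (1-γ) * y ≤ ((A \ pivots F A).card : ℝ) := by
    intro A hA
    obtain ⟨hAF, hAy⟩ := mem_filter.mp hA
    have hsub : pivots F A ⊆ A := filter_subset _ _
    have hple : (pivots F A).card ≤ A.card := card_le_card hsub
    have hcard : (A \ pivots F A).card = A.card - (pivots F A).card :=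
      card_sdiff_of_subset hsub
    have hp : ((pivots F A).card : ℝ) < γ * A.card := lt_of_not_ge (hflex A hAF)
    rw [hcard, hAy]
    rw [hAy] at hp hple
    have : ((y - (pivots F A).card : ℕ) : ℝ) = (y:ℝ) - (pivots F A).card :=
      Nat.cast_sub hple
    rw [this]
    linarith
  have H2 : (Fy.card : ℝ) * ((1-γ) * y) ≤ (n.choose (y-1) : ℝ) := by
    calc (Fy.card : ℝ) * ((1-γ) * y) = ∑ _A ∈ Fy, (1-γ) * y := by
          rw [Finset.sum_const, nsmul_eq_mul]
      _ ≤ ∑ A ∈ Fy, ((A \ pivots F A).card : ℝ) := Finset.sum_le_sum H1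
      _ ≤ (n.choose (y-1) : ℝ) := by exact_mod_cast lubell_shadow_count F
  have Hid : (n.choose y : ℝ) * y = (n.choose (y-1) : ℝ) * ((n:ℝ) - y + 1) := by
    have h := Nat.choose_succ_right_eq n (y-1)
    rw [Nat.sub_add_cancel hy1] at h
    have hc : ((n - (y-1) : ℕ) : ℝ) = (n:ℝ) - y + 1 := by
      have h1 : y - 1 ≤ n := by omega
      rw [Nat.cast_sub h1, Nat.cast_sub hy1]
      push_cast
      ring
    calc (n.choose y : ℝ) * y = ((n.choose y * y : ℕ) : ℝ) := by push_cast; ring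
      _ = ((n.choose (y-1) * (n - (y-1)) : ℕ) : ℝ) := by rw [h]
      _ = (n.choose (y-1) : ℝ) * ((n:ℝ) - y + 1) := by rw [Nat.cast_mul, hc]
  have hc0 : (0:ℝ) < (n.choose y : ℝ) := by exact_mod_cast Nat.choose_pos hyn
  have hg : (0:ℝ) < 1 - γ := by linarith
  have ht : (0:ℝ) < (n:ℝ) - y + 1 := by
    have : (y:ℝ) ≤ n := by exact_mod_cast hyn
    linarith
  rw [div_le_div_iff₀ hc0 (by positivity)]
  have hy0 : (0:ℝ) < (y:ℝ) := by exact_mod_cast hy1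
  nlinarith [H2, Hid, mul_pos hg ht, Fy.card.cast_nonneg (α := ℝ)]

/-- A harmonic-type sum is bounded by a difference of logarithms. -/
lemma lubell_harm_log (n : ℕ) : ∀ K : ℕ, K < n →
    ∑ y ∈ Icc 1 K, (1:ℝ)/((n:ℝ) - y + 1) ≤ Real.log n - Real.log ((n:ℝ) - K) := by
  intro K
  induction K with
  | zero => intro _; simp
  | succ K ih =>
    intro hK
    have hK' : K < n := Nat.lt_of_succ_lt hK
    rw [Finset.sum_Icc_succ_top (by omega : 1 ≤ K + 1)]
    have hx : (2:ℝ) ≤ (n:ℝ) - K := by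
      have : (K:ℝ) + 2 ≤ n := by exact_mod_cast (by omega : K + 2 ≤ n)
      linarith
    set x : ℝ := (n:ℝ) - K with hxdef
    have key : 1/x ≤ Real.log x - Real.log (x - 1) := by
      have h1 : (0:ℝ) < x - 1 := by linarith
      have h0 : (0:ℝ) < x := by linarith
      have := Real.log_le_sub_one_of_pos (by positivity : (0:ℝ) < (x-1)/x)
      rw [Real.log_div (by linarith) (by linarith)] at this
      have harith : (x-1)/x - 1 = -(1/x) := by field_simp; ring
      linarith
    have hcast1 : (n:ℝ) - (↑(K+1):ℝ) + 1 = x := by push_cast; ring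
    have hcast2 : (n:ℝ) - (↑(K+1):ℝ) = x - 1 := by push_cast; ring
    rw [hcast1, hcast2]
    have := ih hK'
    linarith

/-- If `0 ≤ γ < 1`, `0 ≤ δ < 1`, every member of `F` has size at most `δn`, and no
member of `F` is `γ`-flexible, then `ℓ(F) < 1 + (1/(1-γ))·ln(1/(1-δ))`. -/
theorem lubell_lt_of_no_flexible (n : ℕ) (F : Finset (Finset (Fin n))) (γ δ : ℝ)
    (hγ0 : 0 ≤ γ) (hγ1 : γ < 1) (hδ0 : 0 ≤ δ) (hδ1 : δ < 1)
    (hsize : ∀ A ∈ F, (A.card : ℝ) ≤ δ * n)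
    (hflex : ∀ A ∈ F, ¬ Flexible F γ A) :
    (∑ A ∈ F, (1 : ℝ) / (n.choose A.card)) < 1 + (1 / (1 - γ)) * Real.log (1 / (1 - δ)) := by
  have hg : (0:ℝ) < 1 - γ := by linarith
  have hd : (0:ℝ) < 1 - δ := by linarith
  have hlog0 : 0 ≤ Real.log (1 / (1 - δ)) := by
    apply Real.log_nonneg
    rw [le_div_iff₀ hd]
    linarith
  have hmulnn : 0 ≤ (1 / (1 - γ)) * Real.log (1 / (1 - δ)) := by positivity
  -- the empty set is not in F
  have hempty : (∅ : Finset (Fin n)) ∉ F := by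
    intro h
    exact hflex ∅ h (by simp [Flexible])
  -- main claim: the sum is at most (1/(1-γ)) * log (1/(1-δ))
  have main : (∑ A ∈ F, (1 : ℝ) / (n.choose A.card))
      ≤ (1 / (1 - γ)) * Real.log (1 / (1 - δ)) := by
    rcases F.eq_empty_or_nonempty with rfl | ⟨A0, hA0⟩
    · simpa using hmulnn
    -- F is nonempty, so n ≥ 1
    have hA0ne : A0 ≠ ∅ := fun h => hempty (h ▸ hA0)
    have hn1 : 1 ≤ n := by
      obtain ⟨i, -⟩ := Finset.nonempty_iff_ne_empty.mpr hA0ne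
      exact i.pos
    have hnR : (0:ℝ) < n := by exact_mod_cast hn1
    set K := ⌊δ * n⌋₊ with hK
    have hKle : (K:ℝ) ≤ δ * n := Nat.floor_le (by positivity)
    have hKn : K < n := by
      rw [hK, Nat.floor_lt (by positivity)]
      nlinarith
    have hnK : (0:ℝ) < (n:ℝ) - K := by
      have : (K:ℝ) < n := by exact_mod_cast hKn
      linarith
    -- group the sum by cardinality
    have hgroup : (∑ A ∈ F, (1 : ℝ) / (n.choose A.card))
        = ∑ y ∈ Finset.range (n+1),
            ((F.filter (fun A => A.card = y)).card : ℝ) / (n.choose y) := by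
      rw [← Finset.sum_fiberwise_of_maps_to (g := fun A : Finset (Fin n) => A.card)
        (t := Finset.range (n+1)) (fun A _ => Finset.mem_range.mpr (by
          show A.card < n + 1
          have := card_le_card (subset_univ A)
          simp only [card_univ, Fintype.card_fin] at this
          omega))]
      apply Finset.sum_congr rfl
      intro y _
      rw [Finset.sum_congr rfl (fun A hA => by rw [(Finset.mem_filter.mp hA).2]),
        Finset.sum_const, nsmul_eq_mul, mul_one_div]
    rw [hgroup]
    have hterm : ∀ y ∈ Finset.range (n+1),
        ((F.filter (fun A => A.card = y)).card : ℝ) / (n.choose y)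
          ≤ if y ∈ Icc 1 K then 1/((1-γ) * ((n:ℝ) - y + 1)) else 0 := by
      intro y hy
      have hyn : y ≤ n := by simpa using Nat.lt_succ_iff.mp (Finset.mem_range.mp hy)
      rcases (F.filter (fun A => A.card = y)).eq_empty_or_nonempty with he | ⟨A, hA⟩
      · rw [he]
        simp only [card_empty, Nat.cast_zero, zero_div]
        split
        · have ht : (0:ℝ) < (n:ℝ) - y + 1 := by
            have : (y:ℝ) ≤ n := by exact_mod_cast hyn
            linarith
          exact le_of_lt (div_pos one_pos (mul_pos hg ht))
        · exact le_refl 0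
      · obtain ⟨hAF, hAy⟩ := Finset.mem_filter.mp hA
        have hy1 : 1 ≤ y := by
          rcases Nat.eq_zero_or_pos y with h0 | h; swap; · exact h
          exfalso
          apply hempty
          have : A = ∅ := Finset.card_eq_zero.mp (by omega)
          exact this ▸ hAF
        have hyK : y ≤ K := Nat.le_floor (hAy ▸ hsize A hAF)
        rw [if_pos (Finset.mem_Icc.mpr ⟨hy1, hyK⟩)]
        exact lubell_level_bound F γ hγ1 (fun B hB => hflex B hB) y hy1 hyn
    calc ∑ y ∈ Finset.range (n+1),
            ((F.filter (fun A => A.card = y)).card : ℝ) / (n.choose y)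
        ≤ ∑ y ∈ Finset.range (n+1),
            (if y ∈ Icc 1 K then 1/((1-γ) * ((n:ℝ) - y + 1)) else 0) :=
          Finset.sum_le_sum hterm
      _ = ∑ y ∈ Icc 1 K, 1/((1-γ) * ((n:ℝ) - y + 1)) := by
          rw [← Finset.sum_filter]
          apply Finset.sum_congr _ (fun _ _ => rfl)
          ext y
          simp only [Finset.mem_filter, Finset.mem_range, Finset.mem_Icc]
          omega
      _ = (1 / (1 - γ)) * ∑ y ∈ Icc 1 K, (1:ℝ)/((n:ℝ) - y + 1) := by
          rw [Finset.mul_sum]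
          apply Finset.sum_congr rfl
          intro y _
          rw [← one_div_mul_one_div]
      _ ≤ (1 / (1 - γ)) * (Real.log n - Real.log ((n:ℝ) - K)) := by
          apply mul_le_mul_of_nonneg_left (lubell_harm_log n K hKn)
          positivity
      _ ≤ (1 / (1 - γ)) * Real.log (1 / (1 - δ)) := by
          apply mul_le_mul_of_nonneg_left _ (by positivity)
          rw [← Real.log_div hnR.ne' hnK.ne']
          apply Real.log_le_log (by positivity)
          rw [div_le_div_iff₀ hnK hd]
          nlinarith
  linarith
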